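/- For the types B_N, B_N^∨ (with θ = θ₁ in the definition of M_j) and D_N with N ≥ 2 (with θ = θ₂ and the plus sign), for all j, k ∈ {1,…,N} and every y ∈ ℝ, ∫₀^L conj(M_j(x+iy)) M_k(x+iy) dx = δ_{jk} m_j(y), where m_j(y) = L { e^{4πJ(j)y/L} θ₂(2(J(j)τ − i𝒩y/L); 2𝒩τ) + e^{−4πJ(j)y/L} θ₂(2(J(j)τ + i𝒩y/L); 2𝒩τ) } for all interior indices j, except that m₁(y) = 4L θ₂(2i𝒩y/L; 2𝒩τ) for types B_N, B_N^∨ and D_N, and additionally for type D_N the index j = N carries m_N(y) = 2L { e^{4πJ(N)y/L} θ₂(2(J(N)τ − i𝒩y/L); 2𝒩τ) + e^{−4πJ(N)y/L} θ₂(2(J(N)τ + i𝒩y/L); 2𝒩τ) }. -/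

import Mathlib

open Complex MeasureTheory
open scoped Real ComplexConjugate

noncomputable section

/-- The Jacobi theta function θ₀. -/
def jtheta0 (v τ : ℂ) : ℂ :=
  ∑' n : ℤ, (-1 : ℂ) ^ n * Complex.exp (π * I * τ * (n : ℂ) ^ 2) *
    Complex.exp (2 * π * I * (n : ℂ) * v)

/-- The Jacobi theta function θ₁. -/
def jtheta1 (v τ : ℂ) : ℂ :=
  I * ∑' n : ℤ, (-1 : ℂ) ^ n * Complex.exp (π * I * τ * ((n : ℂ) - 1 / 2) ^ 2) *
    Complex.exp ((2 * (n : ℂ) - 1) * π * I * v)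

/-- The Jacobi theta function θ₂. -/
def jtheta2 (v τ : ℂ) : ℂ :=
  ∑' n : ℤ, Complex.exp (π * I * τ * ((n : ℂ) - 1 / 2) ^ 2) *
    Complex.exp ((2 * (n : ℂ) - 1) * π * I * v)

/-- The Jacobi theta function θ₃. -/
def jtheta3 (v τ : ℂ) : ℂ :=
  ∑' n : ℤ, Complex.exp (π * I * τ * (n : ℂ) ^ 2) * Complex.exp (2 * π * I * (n : ℂ) * v)

/-- Dedekind's eta function. -/
def dedekindEta (τ : ℂ) : ℂ :=
  Complex.exp (π * I * τ / 12) * ∏' n : ℕ, (1 - Complex.exp (2 * π * I * ((n : ℂ) + 1) * τ))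

/-- For types B_N, B_N^∨:
M_j(z) = e^{2πiJz/L} θ₁(Jτ + 𝒩z/L; 𝒩τ) − e^{−2πiJz/L} θ₁(Jτ − 𝒩z/L; 𝒩τ), τ = iW/L. -/
def MB (nn : ℕ) (L W : ℝ) (Jj : ℝ) (z : ℂ) : ℂ :=
  Complex.exp (2 * π * I * Jj * z / L) *
      jtheta1 ((Jj : ℂ) * (I * W / L) + nn * z / L) (nn * (I * W / L)) -
    Complex.exp (-(2 * π * I * Jj * z / L)) *
      jtheta1 ((Jj : ℂ) * (I * W / L) - nn * z / L) (nn * (I * W / L))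

/-- For type D_N:
M_j(z) = e^{2πiJz/L} θ₂(Jτ + 𝒩z/L; 𝒩τ) + e^{−2πiJz/L} θ₂(Jτ − 𝒩z/L; 𝒩τ), τ = iW/L. -/
def MD (nn : ℕ) (L W : ℝ) (Jj : ℝ) (z : ℂ) : ℂ :=
  Complex.exp (2 * π * I * Jj * z / L) *
      jtheta2 ((Jj : ℂ) * (I * W / L) + nn * z / L) (nn * (I * W / L)) +
    Complex.exp (-(2 * π * I * Jj * z / L)) *
      jtheta2 ((Jj : ℂ) * (I * W / L) - nn * z / L) (nn * (I * W / L))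

/-- The generic value L { e^{4πJy/L} θ₂(2(Jτ − i𝒩y/L); 2𝒩τ) + e^{−4πJy/L} θ₂(2(Jτ + i𝒩y/L); 2𝒩τ) }. -/
def mStd (nn : ℕ) (L W : ℝ) (Jj y : ℝ) : ℂ :=
  (L : ℂ) *
    (Complex.exp (4 * π * Jj * y / L) *
        jtheta2 (2 * ((Jj : ℂ) * (I * W / L) - I * nn * y / L)) (2 * nn * (I * W / L)) +
      Complex.exp (-(4 * π * Jj * y / L)) *
        jtheta2 (2 * ((Jj : ℂ) * (I * W / L) + I * nn * y / L)) (2 * nn * (I * W / L)))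

/-- m_j(y) for types B_N, B_N^∨ (0-based index j : Fin N with J(j) = j). -/
def mB (N nn : ℕ) (L W : ℝ) (j : Fin N) (y : ℝ) : ℂ :=
  if (j : ℕ) = 0 then (4 * L : ℂ) * jtheta2 (2 * I * nn * y / L) (2 * nn * (I * W / L))
  else mStd nn L W ((j : ℕ) : ℝ) y

/-- m_j(y) for type D_N (0-based index j : Fin N with J(j) = j). -/
def mD (N nn : ℕ) (L W : ℝ) (j : Fin N) (y : ℝ) : ℂ :=
  if (j : ℕ) = 0 then (4 * L : ℂ) * jtheta2 (2 * I * nn * y / L) (2 * nn * (I * W / L))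
  else if (j : ℕ) = N - 1 then 2 * mStd nn L W ((j : ℕ) : ℝ) y
  else mStd nn L W ((j : ℕ) : ℝ) y

namespace Stmt4Aux

/-! ### Basic helpers -/

lemma two_pi_I_ne : (2 * ↑π * I : ℂ) ≠ 0 := by
  intro h
  simp [Complex.ext_iff, Real.pi_ne_zero] at h

lemma norm_exp_freq (L : ℝ) (d : ℤ) (x : ℝ) : ‖Complex.exp (π * I * (d : ℂ) * x / L)‖ = 1 := by
  have : π * I * (d : ℂ) * x / L = ((π * d * x / L : ℝ) : ℂ) * I := by push_cast; ring
  rw [this, Complex.norm_exp_ofReal_mul_I]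

lemma summable_norm_exp_quad {τ' v c : ℂ} (hτ : 0 < τ'.im) :
    Summable fun n : ℤ => ‖Complex.exp (π * I * τ' * ((n : ℂ) - 1 / 2) ^ 2
      + (2 * (n : ℂ) - 1) * v + c)‖ := by
  have key : ∀ n : ℤ, Complex.exp (π * I * τ' * ((n : ℂ) - 1 / 2) ^ 2
      + (2 * (n : ℂ) - 1) * v + c)
      = Complex.exp (π * I * τ' / 4 - v + c) *
        jacobiTheta₂_term n ((2 * v - π * I * τ') / (2 * π * I)) τ' := by
    intro n
    rw [jacobiTheta₂_term, ← Complex.exp_add]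
    congr 1
    have h2 : 2 * (π:ℂ) * I * (n:ℂ) * ((2 * v - π * I * τ') / (2 * π * I))
        = (n:ℂ) * (2 * v - π * I * τ') := by
      field_simp [Complex.I_ne_zero, Real.pi_ne_zero]
    rw [h2]
    ring
  have := ((summable_jacobiTheta₂_term_iff
      ((2 * v - π * I * τ') / (2 * π * I)) τ').mpr hτ).norm.mul_left
      ‖Complex.exp (π * I * τ' / 4 - v + c)‖
  refine this.congr fun n => ?_
  rw [← norm_mul, ← key n]

/-! ### The exponent and coefficient functions -/

def mu (nn Jn : ℕ) (n : ℤ) : ℤ := (2 * n - 1) * nn + 2 * Jn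

def muN (nn Jn : ℕ) : ℤ → ℤ := fun n => -mu nn Jn n

def EXP (nn : ℕ) (L W : ℝ) (Jn : ℕ) (y : ℝ) (s n : ℤ) : ℂ :=
  π * I * ((nn : ℂ) * (I * W / L)) * ((n : ℂ) - 1 / 2) ^ 2 +
    (2 * (n : ℂ) - 1) * π * I * ((Jn : ℂ) * (I * W / L)) +
    (s : ℂ) * ((2 * (n : ℂ) - 1) * (nn : ℂ) + 2 * (Jn : ℂ)) * π * I * (I * y) / L

def cf (nn : ℕ) (L W : ℝ) (Jn : ℕ) (y : ℝ) (s n : ℤ) : ℂ := Complex.exp (EXP nn L W Jn y s n)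

def fB1 (nn : ℕ) (L W : ℝ) (Jn : ℕ) (y : ℝ) : ℤ → ℂ :=
  fun n => I * (-1 : ℂ) ^ n * cf nn L W Jn y 1 n

def fB2 (nn : ℕ) (L W : ℝ) (Jn : ℕ) (y : ℝ) : ℤ → ℂ :=
  fun n => -I * (-1 : ℂ) ^ n * cf nn L W Jn y (-1) n

def fD1 (nn : ℕ) (L W : ℝ) (Jn : ℕ) (y : ℝ) : ℤ → ℂ :=
  fun n => cf nn L W Jn y 1 n

def fD2 (nn : ℕ) (L W : ℝ) (Jn : ℕ) (y : ℝ) : ℤ → ℂ :=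
  fun n => cf nn L W Jn y (-1) n

def PP (L : ℝ) (f : ℤ → ℂ) (μ : ℤ → ℤ) : ℝ → ℂ :=
  fun x => ∑' n : ℤ, f n * Complex.exp (π * I * (μ n : ℂ) * x / L)

/-! ### Summability -/

lemma summable_norm_cf {L W : ℝ} (hL : 0 < L) (hW : 0 < W) {nn : ℕ} (hnn : 1 ≤ nn)
    (Jn : ℕ) (y : ℝ) (s : ℤ) : Summable fun n : ℤ => ‖cf nn L W Jn y s n‖ := by
  have hnn' : (0:ℝ) < nn := by exact_mod_cast hnn
  have him : (0:ℝ) < ((nn : ℂ) * (I * W / L)).im := by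
    have h1 : (nn:ℂ) * (I * W / L) = ((nn * W / L : ℝ) : ℂ) * I := by push_cast; ring
    rw [h1, Complex.mul_I_im, Complex.ofReal_re]
    positivity
  have := summable_norm_exp_quad (τ' := (nn : ℂ) * (I * W / L))
    (v := π * I * ((Jn : ℂ) * (I * W / L)) + (s : ℂ) * (nn : ℂ) * π * I * (I * y) / L)
    (c := (s : ℂ) * (2 * (Jn : ℂ)) * π * I * (I * y) / L) him
  refine this.congr fun n => ?_
  rw [cf]
  congr 2
  rw [EXP]
  push_cast
  ring

lemma norm_unit1 (n : ℤ) : ‖I * (-1 : ℂ) ^ n‖ = 1 := by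
  rw [norm_mul, norm_zpow]; simp

lemma norm_unit2 (n : ℤ) : ‖-I * (-1 : ℂ) ^ n‖ = 1 := by
  rw [norm_mul, norm_zpow]; simp

lemma summable_norm_fB1 {L W : ℝ} (hL : 0 < L) (hW : 0 < W) {nn : ℕ} (hnn : 1 ≤ nn)
    (Jn : ℕ) (y : ℝ) : Summable fun n : ℤ => ‖fB1 nn L W Jn y n‖ :=
  (summable_norm_cf hL hW hnn Jn y 1).congr fun n => by
    simp only [fB1]; rw [norm_mul, norm_unit1, one_mul]

lemma summable_norm_fB2 {L W : ℝ} (hL : 0 < L) (hW : 0 < W) {nn : ℕ} (hnn : 1 ≤ nn)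
    (Jn : ℕ) (y : ℝ) : Summable fun n : ℤ => ‖fB2 nn L W Jn y n‖ :=
  (summable_norm_cf hL hW hnn Jn y (-1)).congr fun n => by
    simp only [fB2]; rw [norm_mul, norm_unit2, one_mul]

lemma summable_norm_fD1 {L W : ℝ} (hL : 0 < L) (hW : 0 < W) {nn : ℕ} (hnn : 1 ≤ nn)
    (Jn : ℕ) (y : ℝ) : Summable fun n : ℤ => ‖fD1 nn L W Jn y n‖ :=
  (summable_norm_cf hL hW hnn Jn y 1).congr fun n => rfl

lemma summable_norm_fD2 {L W : ℝ} (hL : 0 < L) (hW : 0 < W) {nn : ℕ} (hnn : 1 ≤ nn)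
    (Jn : ℕ) (y : ℝ) : Summable fun n : ℤ => ‖fD2 nn L W Jn y n‖ :=
  (summable_norm_cf hL hW hnn Jn y (-1)).congr fun n => rfl

/-! ### The key integral computation -/

lemma integral_exp_freq {L : ℝ} (hL : 0 < L) (d : ℤ) (hd : (2:ℤ) ∣ d) :
    ∫ x in (0:ℝ)..L, Complex.exp (π * I * (d : ℂ) * x / L)
      = if d = 0 then (L : ℂ) else 0 := by
  rcases eq_or_ne d 0 with h | h
  · simp [h]
  · rw [if_neg h]
    have hL' : (L : ℂ) ≠ 0 := Complex.ofReal_ne_zero.mpr hL.ne'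
    have hd' : (d : ℂ) ≠ 0 := Int.cast_ne_zero.mpr h
    have hπ : (π : ℂ) ≠ 0 := Complex.ofReal_ne_zero.mpr Real.pi_ne_zero
    have hc : (π * I * (d : ℂ) / L) ≠ 0 := by
      apply div_ne_zero (by simp [hπ, Complex.I_ne_zero, hd']) hL'
    have hrw : ∀ x : ℝ, π * I * (d : ℂ) * x / L = (π * I * (d:ℂ) / L) * x := fun x => by ring
    simp_rw [hrw]
    rw [integral_exp_mul_complex hc]
    obtain ⟨e, he⟩ := hd
    have h1 : (π * I * (d:ℂ) / L) * (L : ℂ) = (e : ℂ) * (2 * π * I) := by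
      rw [div_mul_cancel₀ _ hL']
      have : (d : ℂ) = 2 * e := by exact_mod_cast congrArg Int.cast he
      rw [this]; ring
    rw [h1, Complex.exp_int_mul_two_pi_mul_I]
    simp

lemma pairing {L : ℝ} (hL : 0 < L) (f g : ℤ → ℂ) (μ ν : ℤ → ℤ)
    (hf : Summable fun n => ‖f n‖) (hg : Summable fun n => ‖g n‖)
    (hpar : ∀ n m, (2:ℤ) ∣ (ν m - μ n)) :
    ∫ x in (0:ℝ)..L, (conj (PP L f μ x)) * PP L g ν x
      = (L : ℂ) * ∑' p : ℤ × ℤ, (if μ p.1 = ν p.2 then conj (f p.1) * g p.2 else 0) := by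
  simp only [PP]
  have hpt : ∀ x : ℝ,
      (conj (∑' n : ℤ, f n * Complex.exp (π * I * (μ n : ℂ) * x / L))) *
        (∑' m : ℤ, g m * Complex.exp (π * I * (ν m : ℂ) * x / L))
      = ∑' p : ℤ × ℤ, (conj (f p.1) * g p.2) *
          Complex.exp (π * I * ((ν p.2 - μ p.1 : ℤ) : ℂ) * x / L) := by
    intro x
    rw [Complex.conj_tsum]
    have e1 : ∀ n : ℤ, conj (f n * Complex.exp (π * I * (μ n : ℂ) * x / L))
        = conj (f n) * Complex.exp (π * I * ((-μ n : ℤ) : ℂ) * x / L) := by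
      intro n
      rw [map_mul, ← Complex.exp_conj]
      congr 1
      simp only [map_div₀, map_mul, Complex.conj_I, Complex.conj_ofReal, map_intCast]
      push_cast
      ring
    simp_rw [e1]
    rw [tsum_mul_tsum_of_summable_norm
      (by
        refine hf.congr fun n => ?_
        rw [norm_mul, norm_exp_freq, mul_one, RCLike.norm_conj])
      (by
        refine hg.congr fun m => ?_
        rw [norm_mul, norm_exp_freq, mul_one])]
    refine tsum_congr fun p => ?_
    rw [mul_mul_mul_comm, ← Complex.exp_add]
    congr 1
    push_cast
    ring
  rw [intervalIntegral.integral_congr (g := fun x => ∑' p : ℤ × ℤ,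
      (conj (f p.1) * g p.2) * Complex.exp (π * I * ((ν p.2 - μ p.1 : ℤ) : ℂ) * x / L))
      (fun x _ => hpt x)]
  rw [intervalIntegral.integral_of_le hL.le]
  have hint : ∀ p : ℤ × ℤ, Integrable (fun x : ℝ => (conj (f p.1) * g p.2) *
      Complex.exp (π * I * ((ν p.2 - μ p.1 : ℤ) : ℂ) * x / L))
      (volume.restrict (Set.Ioc (0:ℝ) L)) := by
    intro p
    apply Continuous.integrableOn_Ioc
    fun_prop
  have hsum : Summable fun p : ℤ × ℤ => ∫ x in Set.Ioc (0:ℝ) L,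
      ‖(conj (f p.1) * g p.2) *
        Complex.exp (π * I * ((ν p.2 - μ p.1 : ℤ) : ℂ) * x / L)‖ := by
    have hb : Summable fun p : ℤ × ℤ => (‖f p.1‖ * ‖g p.2‖) * L :=
      (hf.mul_of_nonneg hg (fun _ => norm_nonneg _) fun _ => norm_nonneg _).mul_right L
    refine hb.congr fun p => ?_
    have hcst : ∀ x : ℝ, ‖(conj (f p.1) * g p.2) *
        Complex.exp (π * I * ((ν p.2 - μ p.1 : ℤ) : ℂ) * x / L)‖ = ‖f p.1‖ * ‖g p.2‖ := by
      intro x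
      rw [norm_mul, norm_exp_freq, mul_one, norm_mul, RCLike.norm_conj]
    rw [MeasureTheory.setIntegral_congr_fun measurableSet_Ioc fun x _ => hcst x]
    rw [MeasureTheory.setIntegral_const, Real.volume_real_Ioc_of_le hL.le, smul_eq_mul, sub_zero,
      mul_comm]
  rw [← MeasureTheory.integral_tsum_of_summable_integral_norm hint hsum]
  rw [← tsum_mul_left]
  refine tsum_congr fun p => ?_
  rw [MeasureTheory.integral_const_mul, ← intervalIntegral.integral_of_le hL.le,
    integral_exp_freq hL _ (hpar p.1 p.2)]
  by_cases h : μ p.1 = ν p.2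
  · rw [if_pos h, if_pos (by omega), mul_comm]
  · rw [if_neg h, if_neg (by omega), mul_zero, mul_zero]

/-! ### Expansion of MB and MD in frequency series -/

lemma pull (a u : ℂ) (h : ℤ → ℂ) : a * (u * ∑' n, h n) = ∑' n, a * u * h n := by
  rw [← mul_assoc]; exact tsum_mul_left.symm

lemma pull_neg (a u : ℂ) (h : ℤ → ℂ) : -(a * (u * ∑' n, h n)) = ∑' n, a * -u * h n := by
  have h2 : -(a * (u * ∑' n, h n)) = (a * -u) * ∑' n, h n := by ring
  rw [h2]; exact tsum_mul_left.symm

lemma pullD (a : ℂ) (h : ℤ → ℂ) : a * ∑' n, h n = ∑' n, a * h n := tsum_mul_left.symm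

lemma termHelper (u w c A B E D : ℂ) (h : c + A + B = E + D) :
    Complex.exp c * u * (w * Complex.exp A * Complex.exp B)
      = u * w * Complex.exp E * Complex.exp D := by
  have h2 : Complex.exp c * Complex.exp A * Complex.exp B
      = Complex.exp E * Complex.exp D := by
    rw [← Complex.exp_add, ← Complex.exp_add, ← Complex.exp_add, h]
  calc Complex.exp c * u * (w * Complex.exp A * Complex.exp B)
      = (u * w) * (Complex.exp c * Complex.exp A * Complex.exp B) := by ring
    _ = (u * w) * (Complex.exp E * Complex.exp D) := by rw [h2]
    _ = u * w * Complex.exp E * Complex.exp D := by ring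

lemma termHelperD (c A B E D : ℂ) (h : c + A + B = E + D) :
    Complex.exp c * (Complex.exp A * Complex.exp B)
      = Complex.exp E * Complex.exp D := by
  rw [← Complex.exp_add, ← Complex.exp_add, ← Complex.exp_add, ← add_assoc, h]

lemma MB_expand (nn : ℕ) (L W : ℝ) (Jn : ℕ) (y x : ℝ) :
    MB nn L W (Jn : ℝ) (x + I * y)
      = PP L (fB1 nn L W Jn y) (mu nn Jn) x + PP L (fB2 nn L W Jn y) (muN nn Jn) x := by
  simp only [PP, fB1, fB2, muN]
  rw [MB, sub_eq_add_neg]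
  congr 1
  · rw [jtheta1, pull]
    refine tsum_congr fun n => ?_
    rw [cf]
    apply termHelper
    rw [EXP, mu]
    push_cast
    ring
  · rw [jtheta1, pull_neg]
    refine tsum_congr fun n => ?_
    rw [cf]
    apply termHelper
    rw [EXP, mu]
    push_cast
    ring

lemma MD_expand (nn : ℕ) (L W : ℝ) (Jn : ℕ) (y x : ℝ) :
    MD nn L W (Jn : ℝ) (x + I * y)
      = PP L (fD1 nn L W Jn y) (mu nn Jn) x + PP L (fD2 nn L W Jn y) (muN nn Jn) x := by
  simp only [PP, fD1, fD2, muN]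
  rw [MD]
  congr 1
  · rw [jtheta2, pullD]
    refine tsum_congr fun n => ?_
    rw [cf]
    apply termHelperD
    rw [EXP, mu]
    push_cast
    ring
  · rw [jtheta2, pullD]
    refine tsum_congr fun n => ?_
    rw [cf]
    apply termHelperD
    rw [EXP, mu]
    push_cast
    ring

/-! ### Solving the frequency-matching equations -/

lemma helper_int {a b c : ℤ} (hc : 0 < c) (h : a * c = b) (hb : |b| < c) : a = 0 ∧ b = 0 := by
  rcases eq_or_ne a 0 with h0 | h0
  · exact ⟨h0, by rw [← h, h0, zero_mul]⟩
  · exfalso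
    have h1 : (1:ℤ) ≤ |a| := Int.one_le_abs h0
    have h2 : |a * c| = |a| * c := by rw [abs_mul, abs_of_pos hc]
    have h3 : |a * c| = |b| := by rw [h]
    nlinarith [abs_nonneg b]

lemma solve_ll {N nn Jj Jk : ℕ} (hj : Jj < N) (hk : Jk < N) (hN : N ≤ nn) (n m : ℤ) :
    mu nn Jj n = mu nn Jk m ↔ (Jj = Jk ∧ m = n) := by
  constructor
  · intro h
    rw [mu, mu] at h
    have h2 : (n - m) * (nn:ℤ) = (Jk:ℤ) - Jj :=
      mul_left_cancel₀ (two_ne_zero) (by linear_combination h)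
    have h3 := helper_int (by omega : (0:ℤ) < nn) h2 (by rw [abs_lt]; omega)
    omega
  · rintro ⟨h1, rfl⟩
    rw [mu, mu, h1]

lemma solve_lr {N nn Jj Jk : ℕ} (hj : Jj < N) (hk : Jk < N) (hN : N ≤ nn)
    (hlt : Jj + Jk < nn) (n m : ℤ) :
    mu nn Jj n = -(mu nn Jk m) ↔ (Jj = 0 ∧ Jk = 0 ∧ m = 1 - n) := by
  constructor
  · intro h
    rw [mu, mu] at h
    have h2 : (n + m - 1) * (nn:ℤ) = -(Jj:ℤ) - Jk :=
      mul_left_cancel₀ (two_ne_zero) (by linear_combination h)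
    have h3 := helper_int (by omega : (0:ℤ) < nn) h2 (by rw [abs_lt]; omega)
    omega
  · rintro ⟨h1, h2, rfl⟩
    rw [mu, mu, h1, h2]
    push_cast
    ring

lemma solve_lr_D {nn Jj : ℕ} (h2 : nn = 2 * Jj) (h0 : 0 < Jj) (n m : ℤ) :
    mu nn Jj n = -(mu nn Jj m) ↔ m = -n := by
  subst h2
  constructor
  · intro h
    rw [mu, mu] at h
    have h3 : (n + m) * (4 * (Jj:ℤ)) = 0 := by push_cast at h ⊢; linear_combination h
    rcases mul_eq_zero.mp h3 with h4 | h4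
    · omega
    · omega
  · rintro rfl
    rw [mu, mu]
    push_cast
    ring

/-! ### Evaluating the pair sums -/

lemma tsum_pairs_zero {c : ℤ × ℤ → ℂ} {μ ν : ℤ → ℤ} (h : ∀ n m, ¬(μ n = ν m)) :
    ∑' p : ℤ × ℤ, (if μ p.1 = ν p.2 then c p else 0) = 0 := by
  rw [show (fun p : ℤ × ℤ => if μ p.1 = ν p.2 then c p else 0) = fun _ => 0 from
    funext fun p => if_neg (h p.1 p.2)]
  exact tsum_zero

lemma tsum_pairs_graph {f g : ℤ → ℂ} (hf : Summable fun n => ‖f n‖)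
    (hg : Summable fun n => ‖g n‖) {μ ν : ℤ → ℤ} (φ : ℤ → ℤ)
    (h : ∀ n m, μ n = ν m ↔ m = φ n) :
    ∑' p : ℤ × ℤ, (if μ p.1 = ν p.2 then conj (f p.1) * g p.2 else 0)
      = ∑' n : ℤ, conj (f n) * g (φ n) := by
  have hs : Summable fun p : ℤ × ℤ => (if μ p.1 = ν p.2 then conj (f p.1) * g p.2 else 0) := by
    apply Summable.of_norm_bounded
      (hf.mul_of_nonneg hg (fun _ => norm_nonneg _) fun _ => norm_nonneg _)
    intro p
    by_cases hp : μ p.1 = ν p.2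
    · rw [if_pos hp, norm_mul, RCLike.norm_conj]
    · rw [if_neg hp, norm_zero]
      positivity
  rw [Summable.tsum_prod hs]
  refine tsum_congr fun n => ?_
  simp_rw [h]
  rw [tsum_eq_single (φ n) fun b hb => if_neg hb, if_pos rfl]

/-! ### Unit factor computations -/

lemma conj_neg_one_zpow (n : ℤ) : conj ((-1:ℂ)^n) = (-1:ℂ)^n := by
  rw [map_zpow₀, map_neg, map_one]

lemma neg_one_ne : ((-1:ℂ)) ≠ 0 := by norm_num

lemma zpow_pair (n m : ℤ) (h : n + m = 1) : ((-1:ℂ))^n * ((-1:ℂ))^m = -1 := by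
  rw [← zpow_add₀ neg_one_ne, h, zpow_one]

lemma zpow_pair' (n m : ℤ) (h : n + m = 2 * n) : ((-1:ℂ))^n * ((-1:ℂ))^m = 1 := by
  rw [← zpow_add₀ neg_one_ne, h, zpow_mul]
  norm_num

lemma unitB_diag (n : ℤ) : conj (I * (-1:ℂ)^n) * (I * (-1:ℂ)^n) = 1 := by
  calc conj (I * (-1:ℂ)^n) * (I * (-1:ℂ)^n)
      = -(I*I) * ((-1:ℂ)^n * (-1:ℂ)^n) := by
        rw [map_mul, Complex.conj_I, conj_neg_one_zpow]; ring
    _ = 1 := by rw [zpow_pair' n n (by ring), Complex.I_mul_I]; ring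

lemma unitB_diag2 (n : ℤ) : conj (-I * (-1:ℂ)^n) * (-I * (-1:ℂ)^n) = 1 := by
  calc conj (-I * (-1:ℂ)^n) * (-I * (-1:ℂ)^n)
      = -(I*I) * ((-1:ℂ)^n * (-1:ℂ)^n) := by
        rw [map_mul, map_neg, Complex.conj_I, conj_neg_one_zpow]; ring
    _ = 1 := by rw [zpow_pair' n n (by ring), Complex.I_mul_I]; ring

lemma unitB_cross1 (n : ℤ) : conj (I * (-1:ℂ)^n) * (-I * (-1:ℂ)^(1-n)) = 1 := by
  calc conj (I * (-1:ℂ)^n) * (-I * (-1:ℂ)^(1-n))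
      = (I*I) * ((-1:ℂ)^n * (-1:ℂ)^(1-n)) := by
        rw [map_mul, Complex.conj_I, conj_neg_one_zpow]; ring
    _ = 1 := by rw [zpow_pair n (1-n) (by ring), Complex.I_mul_I]; ring

lemma unitB_cross2 (n : ℤ) : conj (-I * (-1:ℂ)^n) * (I * (-1:ℂ)^(1-n)) = 1 := by
  calc conj (-I * (-1:ℂ)^n) * (I * (-1:ℂ)^(1-n))
      = (I*I) * ((-1:ℂ)^n * (-1:ℂ)^(1-n)) := by
        rw [map_mul, map_neg, Complex.conj_I, conj_neg_one_zpow]; ring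
    _ = 1 := by rw [zpow_pair n (1-n) (by ring), Complex.I_mul_I]; ring

lemma conj_unit_mul (u v a b : ℂ) (h : conj u * v = 1) :
    conj (u * a) * (v * b) = conj a * b := by
  rw [map_mul]
  calc conj u * conj a * (v * b) = (conj u * v) * (conj a * b) := by ring
  _ = conj a * b := by rw [h, one_mul]

/-! ### Values of the diagonal sums -/

lemma jtheta2_neg (v τ : ℂ) : jtheta2 (-v) τ = jtheta2 v τ := by
  rw [jtheta2, jtheta2, ← (Equiv.subLeft (1:ℤ)).tsum_eq]
  refine tsum_congr fun n => ?_
  rw [← Complex.exp_add, ← Complex.exp_add]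
  congr 1
  simp only [Equiv.subLeft_apply]
  push_cast
  ring

lemma Sdiag1 (nn : ℕ) (L W : ℝ) (Jn : ℕ) (y : ℝ) :
    ∑' n : ℤ, conj (cf nn L W Jn y 1 n) * cf nn L W Jn y 1 n
      = Complex.exp (-(4 * π * (Jn:ℂ) * y / L)) *
        jtheta2 (2 * ((Jn:ℂ) * (I * W / L) + I * nn * y / L)) (2 * nn * (I * W / L)) := by
  rw [jtheta2, ← tsum_mul_left]
  refine tsum_congr fun n => ?_
  simp only [cf]
  rw [← Complex.exp_conj, ← Complex.exp_add, ← Complex.exp_add, ← Complex.exp_add]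
  congr 1
  simp only [EXP, map_add, map_mul, map_div₀, map_sub, map_pow, map_one, map_ofNat,
    Complex.conj_I, Complex.conj_ofReal, map_intCast, map_natCast]
  push_cast
  linear_combination (4 * (π:ℂ) * (Jn:ℂ) * y / L) * Complex.I_sq

lemma Sdiag2 (nn : ℕ) (L W : ℝ) (Jn : ℕ) (y : ℝ) :
    ∑' n : ℤ, conj (cf nn L W Jn y (-1) n) * cf nn L W Jn y (-1) n
      = Complex.exp (4 * π * (Jn:ℂ) * y / L) *
        jtheta2 (2 * ((Jn:ℂ) * (I * W / L) - I * nn * y / L)) (2 * nn * (I * W / L)) := by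
  rw [jtheta2, ← tsum_mul_left]
  refine tsum_congr fun n => ?_
  simp only [cf]
  rw [← Complex.exp_conj, ← Complex.exp_add, ← Complex.exp_add, ← Complex.exp_add]
  congr 1
  simp only [EXP, map_add, map_mul, map_div₀, map_sub, map_pow, map_one, map_ofNat,
    Complex.conj_I, Complex.conj_ofReal, map_intCast, map_natCast]
  push_cast
  linear_combination (-(4 * (π:ℂ) * (Jn:ℂ) * y / L)) * Complex.I_sq

lemma cf_cross0_a (nn : ℕ) (L W : ℝ) (y : ℝ) (n : ℤ) :
    cf nn L W 0 y (-1) (1-n) = cf nn L W 0 y 1 n := by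
  rw [cf, cf]
  congr 1
  simp only [EXP]
  push_cast
  ring

lemma cf_cross0_b (nn : ℕ) (L W : ℝ) (y : ℝ) (n : ℤ) :
    cf nn L W 0 y 1 (1-n) = cf nn L W 0 y (-1) n := by
  rw [cf, cf]
  congr 1
  simp only [EXP]
  push_cast
  ring

lemma cf_crossD_a (nn : ℕ) (L W : ℝ) (Jn : ℕ) (h : nn = 2 * Jn) (y : ℝ) (n : ℤ) :
    cf nn L W Jn y (-1) (-n) = cf nn L W Jn y 1 n := by
  subst h
  rw [cf, cf]
  congr 1
  simp only [EXP]
  push_cast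
  ring

lemma cf_crossD_b (nn : ℕ) (L W : ℝ) (Jn : ℕ) (h : nn = 2 * Jn) (y : ℝ) (n : ℤ) :
    cf nn L W Jn y 1 (-n) = cf nn L W Jn y (-1) n := by
  subst h
  rw [cf, cf]
  congr 1
  simp only [EXP]
  push_cast
  ring

lemma masterB (N nn : ℕ) (hNnn : N ≤ nn) (h2N : 2 * N ≤ nn + 1) (hnn : 1 ≤ nn)
    (L W : ℝ) (hL : 0 < L) (hW : 0 < W) (j k : Fin N) (y : ℝ) :
    (∫ x in (0:ℝ)..L,
        conj (MB nn L W ((j : ℕ) : ℝ) (x + I * y)) * MB nn L W ((k : ℕ) : ℝ) (x + I * y))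
      = if j = k then mB N nn L W j y else 0 := by
  have hj : (j : ℕ) < N := j.isLt
  have hk : (k : ℕ) < N := k.isLt
  have hf1 := fun Jn => summable_norm_fB1 hL hW hnn Jn y
  have hf2 := fun Jn => summable_norm_fB2 hL hW hnn Jn y
  have hcont : ∀ (f : ℤ → ℂ) (μ : ℤ → ℤ), (Summable fun n => ‖f n‖) →
      Continuous (PP L f μ) := by
    intro f μ hsf
    apply continuous_tsum (fun n => by fun_prop) hsf
    intro n x
    exact le_of_eq (by rw [norm_mul, norm_exp_freq, mul_one])
  have hInt : ∀ (f g : ℤ → ℂ) (μ ν : ℤ → ℤ), (Summable fun n => ‖f n‖) →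
      (Summable fun n => ‖g n‖) →
      IntervalIntegrable (fun x => conj (PP L f μ x) * PP L g ν x) volume 0 L := by
    intro f g μ ν hsf hsg
    apply Continuous.intervalIntegrable
    exact (Complex.continuous_conj.comp (hcont f μ hsf)).mul (hcont g ν hsg)
  rw [intervalIntegral.integral_congr (g := fun x =>
      conj (PP L (fB1 nn L W (j:ℕ) y) (mu nn (j:ℕ)) x) *
        PP L (fB1 nn L W (k:ℕ) y) (mu nn (k:ℕ)) x
      + (conj (PP L (fB1 nn L W (j:ℕ) y) (mu nn (j:ℕ)) x) *
        PP L (fB2 nn L W (k:ℕ) y) (muN nn (k:ℕ)) x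
      + (conj (PP L (fB2 nn L W (j:ℕ) y) (muN nn (j:ℕ)) x) *
        PP L (fB1 nn L W (k:ℕ) y) (mu nn (k:ℕ)) x
      + conj (PP L (fB2 nn L W (j:ℕ) y) (muN nn (j:ℕ)) x) *
        PP L (fB2 nn L W (k:ℕ) y) (muN nn (k:ℕ)) x)))
      (fun x _ => by rw [MB_expand, MB_expand, map_add]; ring)]
  rw [intervalIntegral.integral_add (hInt _ _ _ _ (hf1 _) (hf1 _))
      (((hInt _ _ _ _ (hf1 _) (hf2 _))).add
        ((hInt _ _ _ _ (hf2 _) (hf1 _)).add (hInt _ _ _ _ (hf2 _) (hf2 _)))),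
    intervalIntegral.integral_add (hInt _ _ _ _ (hf1 _) (hf2 _))
      ((hInt _ _ _ _ (hf2 _) (hf1 _)).add (hInt _ _ _ _ (hf2 _) (hf2 _))),
    intervalIntegral.integral_add (hInt _ _ _ _ (hf2 _) (hf1 _)) (hInt _ _ _ _ (hf2 _) (hf2 _))]
  rw [pairing hL (fB1 nn L W (j:ℕ) y) (fB1 nn L W (k:ℕ) y) (mu nn (j:ℕ)) (mu nn (k:ℕ))
      (hf1 _) (hf1 _)
      (fun n m => ⟨(m-n)*nn + (k:ℕ) - (j:ℕ), by simp only [mu]; push_cast; ring⟩),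
    pairing hL (fB1 nn L W (j:ℕ) y) (fB2 nn L W (k:ℕ) y) (mu nn (j:ℕ)) (muN nn (k:ℕ))
      (hf1 _) (hf2 _)
      (fun n m => ⟨(1-m-n)*nn - (k:ℕ) - (j:ℕ), by simp only [mu, muN]; push_cast; ring⟩),
    pairing hL (fB2 nn L W (j:ℕ) y) (fB1 nn L W (k:ℕ) y) (muN nn (j:ℕ)) (mu nn (k:ℕ))
      (hf2 _) (hf1 _)
      (fun n m => ⟨(m+n-1)*nn + (k:ℕ) + (j:ℕ), by simp only [mu, muN]; push_cast; ring⟩),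
    pairing hL (fB2 nn L W (j:ℕ) y) (fB2 nn L W (k:ℕ) y) (muN nn (j:ℕ)) (muN nn (k:ℕ))
      (hf2 _) (hf2 _)
      (fun n m => ⟨(n-m)*nn + (j:ℕ) - (k:ℕ), by simp only [mu, muN]; push_cast; ring⟩)]
  by_cases hjk : j = k
  · subst hjk
    have T11 : ∑' p : ℤ×ℤ, (if mu nn (j:ℕ) p.1 = mu nn (j:ℕ) p.2 then
        conj (fB1 nn L W (j:ℕ) y p.1) * fB1 nn L W (j:ℕ) y p.2 else 0)
        = Complex.exp (-(4 * π * ((j:ℕ):ℂ) * y / L)) *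
          jtheta2 (2 * (((j:ℕ):ℂ) * (I * W / L) + I * nn * y / L)) (2 * nn * (I * W / L)) := by
      rw [tsum_pairs_graph (hf1 (j:ℕ)) (hf1 (j:ℕ)) (fun n => n)
        (fun n m => by rw [solve_ll hj hj hNnn]; simp),
        ← Sdiag1 nn L W (j:ℕ) y]
      refine tsum_congr fun n => ?_
      simp only [fB1]
      exact conj_unit_mul _ _ _ _ (unitB_diag n)
    have T22 : ∑' p : ℤ×ℤ, (if muN nn (j:ℕ) p.1 = muN nn (j:ℕ) p.2 then
        conj (fB2 nn L W (j:ℕ) y p.1) * fB2 nn L W (j:ℕ) y p.2 else 0)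
        = Complex.exp (4 * π * ((j:ℕ):ℂ) * y / L) *
          jtheta2 (2 * (((j:ℕ):ℂ) * (I * W / L) - I * nn * y / L)) (2 * nn * (I * W / L)) := by
      rw [tsum_pairs_graph (hf2 (j:ℕ)) (hf2 (j:ℕ)) (fun n => n)
        (fun n m => by simp only [muN, neg_inj]; rw [solve_ll hj hj hNnn]; simp),
        ← Sdiag2 nn L W (j:ℕ) y]
      refine tsum_congr fun n => ?_
      simp only [fB2]
      exact conj_unit_mul _ _ _ _ (unitB_diag2 n)
    by_cases hJ0 : (j:ℕ) = 0
    · have T12 : ∑' p : ℤ×ℤ, (if mu nn (j:ℕ) p.1 = muN nn (j:ℕ) p.2 then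
          conj (fB1 nn L W (j:ℕ) y p.1) * fB2 nn L W (j:ℕ) y p.2 else 0)
          = Complex.exp (-(4 * π * ((j:ℕ):ℂ) * y / L)) *
            jtheta2 (2 * (((j:ℕ):ℂ) * (I * W / L) + I * nn * y / L))
              (2 * nn * (I * W / L)) := by
        rw [tsum_pairs_graph (hf1 (j:ℕ)) (hf2 (j:ℕ)) (fun n => 1 - n)
          (fun n m => by simp only [muN]; rw [solve_lr hj hj hNnn (by omega)]; omega),
          ← Sdiag1 nn L W (j:ℕ) y]
        refine tsum_congr fun n => ?_
        simp only [fB1, fB2]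
        rw [conj_unit_mul _ _ _ _ (unitB_cross1 n)]
        congr 1
        rw [hJ0]
        exact cf_cross0_a nn L W y n
      have T21 : ∑' p : ℤ×ℤ, (if muN nn (j:ℕ) p.1 = mu nn (j:ℕ) p.2 then
          conj (fB2 nn L W (j:ℕ) y p.1) * fB1 nn L W (j:ℕ) y p.2 else 0)
          = Complex.exp (4 * π * ((j:ℕ):ℂ) * y / L) *
            jtheta2 (2 * (((j:ℕ):ℂ) * (I * W / L) - I * nn * y / L))
              (2 * nn * (I * W / L)) := by
        rw [tsum_pairs_graph (hf2 (j:ℕ)) (hf1 (j:ℕ)) (fun n => 1 - n)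
          (fun n m => by
            simp only [muN]
            rw [neg_eq_iff_eq_neg, solve_lr hj hj hNnn (by omega)]
            omega),
          ← Sdiag2 nn L W (j:ℕ) y]
        refine tsum_congr fun n => ?_
        simp only [fB1, fB2]
        rw [conj_unit_mul _ _ _ _ (unitB_cross2 n)]
        congr 1
        rw [hJ0]
        exact cf_cross0_b nn L W y n
      rw [T11, T12, T21, T22, if_pos rfl, mB, if_pos hJ0, hJ0]
      have ha1 : 2 * (((0:ℕ):ℂ) * (I * W / L) + I * (nn:ℂ) * y / L)
          = 2 * I * nn * y / L := by push_cast; ring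
      have ha2 : 2 * (((0:ℕ):ℂ) * (I * W / L) - I * (nn:ℂ) * y / L)
          = -(2 * I * (nn:ℂ) * y / L) := by push_cast; ring
      rw [ha1, ha2, jtheta2_neg]
      have hb : Complex.exp (-(4 * π * ((0:ℕ):ℂ) * y / L)) = 1 := by
        norm_num
      have hb2 : Complex.exp (4 * π * ((0:ℕ):ℂ) * y / L) = 1 := by
        norm_num
      rw [hb, hb2]
      push_cast
      ring
    · have hlt : (j:ℕ) + (j:ℕ) < nn := by omega
      have T12 : ∑' p : ℤ×ℤ, (if mu nn (j:ℕ) p.1 = muN nn (j:ℕ) p.2 then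
          conj (fB1 nn L W (j:ℕ) y p.1) * fB2 nn L W (j:ℕ) y p.2 else 0) = 0 :=
        tsum_pairs_zero fun n m h => by
          simp only [muN] at h
          exact hJ0 ((solve_lr hj hj hNnn hlt n m).mp h).1
      have T21 : ∑' p : ℤ×ℤ, (if muN nn (j:ℕ) p.1 = mu nn (j:ℕ) p.2 then
          conj (fB2 nn L W (j:ℕ) y p.1) * fB1 nn L W (j:ℕ) y p.2 else 0) = 0 :=
        tsum_pairs_zero fun n m h => by
          simp only [muN] at h
          exact hJ0 ((solve_lr hj hj hNnn hlt n m).mp (neg_eq_iff_eq_neg.mp h)).1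
      rw [T11, T12, T21, T22, if_pos rfl, mB, if_neg hJ0, mStd]
      push_cast
      ring
  · have hJJ : (j:ℕ) ≠ (k:ℕ) := fun h => hjk (Fin.ext h)
    have hlt : (j:ℕ) + (k:ℕ) < nn := by omega
    have T11 : ∑' p : ℤ×ℤ, (if mu nn (j:ℕ) p.1 = mu nn (k:ℕ) p.2 then
        conj (fB1 nn L W (j:ℕ) y p.1) * fB1 nn L W (k:ℕ) y p.2 else 0) = 0 :=
      tsum_pairs_zero fun n m h => hJJ ((solve_ll hj hk hNnn n m).mp h).1
    have T12 : ∑' p : ℤ×ℤ, (if mu nn (j:ℕ) p.1 = muN nn (k:ℕ) p.2 then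
        conj (fB1 nn L W (j:ℕ) y p.1) * fB2 nn L W (k:ℕ) y p.2 else 0) = 0 :=
      tsum_pairs_zero fun n m h => by
        simp only [muN] at h
        have := (solve_lr hj hk hNnn hlt n m).mp h
        exact hJJ (by omega)
    have T21 : ∑' p : ℤ×ℤ, (if muN nn (j:ℕ) p.1 = mu nn (k:ℕ) p.2 then
        conj (fB2 nn L W (j:ℕ) y p.1) * fB1 nn L W (k:ℕ) y p.2 else 0) = 0 :=
      tsum_pairs_zero fun n m h => by
        simp only [muN] at h
        have := (solve_lr hj hk hNnn hlt n m).mp (neg_eq_iff_eq_neg.mp h)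
        exact hJJ (by omega)
    have T22 : ∑' p : ℤ×ℤ, (if muN nn (j:ℕ) p.1 = muN nn (k:ℕ) p.2 then
        conj (fB2 nn L W (j:ℕ) y p.1) * fB2 nn L W (k:ℕ) y p.2 else 0) = 0 :=
      tsum_pairs_zero fun n m h => by
        simp only [muN, neg_inj] at h
        exact hJJ ((solve_ll hj hk hNnn n m).mp h).1
    rw [T11, T12, T21, T22, if_neg hjk]
    ring

lemma masterD (N nn : ℕ) (hN2 : 2 ≤ N) (hnnD : nn = 2 * (N - 1))
    (L W : ℝ) (hL : 0 < L) (hW : 0 < W) (j k : Fin N) (y : ℝ) :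
    (∫ x in (0:ℝ)..L,
        conj (MD nn L W ((j : ℕ) : ℝ) (x + I * y)) * MD nn L W ((k : ℕ) : ℝ) (x + I * y))
      = if j = k then mD N nn L W j y else 0 := by
  have hNnn : N ≤ nn := by omega
  have hnn : 1 ≤ nn := by omega
  have hj : (j : ℕ) < N := j.isLt
  have hk : (k : ℕ) < N := k.isLt
  have hf1 := fun Jn => summable_norm_fD1 hL hW hnn Jn y
  have hf2 := fun Jn => summable_norm_fD2 hL hW hnn Jn y
  have hcont : ∀ (f : ℤ → ℂ) (μ : ℤ → ℤ), (Summable fun n => ‖f n‖) →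
      Continuous (PP L f μ) := by
    intro f μ hsf
    apply continuous_tsum (fun n => by fun_prop) hsf
    intro n x
    exact le_of_eq (by rw [norm_mul, norm_exp_freq, mul_one])
  have hInt : ∀ (f g : ℤ → ℂ) (μ ν : ℤ → ℤ), (Summable fun n => ‖f n‖) →
      (Summable fun n => ‖g n‖) →
      IntervalIntegrable (fun x => conj (PP L f μ x) * PP L g ν x) volume 0 L := by
    intro f g μ ν hsf hsg
    apply Continuous.intervalIntegrable
    exact (Complex.continuous_conj.comp (hcont f μ hsf)).mul (hcont g ν hsg)
  rw [intervalIntegral.integral_congr (g := fun x =>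
      conj (PP L (fD1 nn L W (j:ℕ) y) (mu nn (j:ℕ)) x) *
        PP L (fD1 nn L W (k:ℕ) y) (mu nn (k:ℕ)) x
      + (conj (PP L (fD1 nn L W (j:ℕ) y) (mu nn (j:ℕ)) x) *
        PP L (fD2 nn L W (k:ℕ) y) (muN nn (k:ℕ)) x
      + (conj (PP L (fD2 nn L W (j:ℕ) y) (muN nn (j:ℕ)) x) *
        PP L (fD1 nn L W (k:ℕ) y) (mu nn (k:ℕ)) x
      + conj (PP L (fD2 nn L W (j:ℕ) y) (muN nn (j:ℕ)) x) *
        PP L (fD2 nn L W (k:ℕ) y) (muN nn (k:ℕ)) x)))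
      (fun x _ => by rw [MD_expand, MD_expand, map_add]; ring)]
  rw [intervalIntegral.integral_add (hInt _ _ _ _ (hf1 _) (hf1 _))
      (((hInt _ _ _ _ (hf1 _) (hf2 _))).add
        ((hInt _ _ _ _ (hf2 _) (hf1 _)).add (hInt _ _ _ _ (hf2 _) (hf2 _)))),
    intervalIntegral.integral_add (hInt _ _ _ _ (hf1 _) (hf2 _))
      ((hInt _ _ _ _ (hf2 _) (hf1 _)).add (hInt _ _ _ _ (hf2 _) (hf2 _))),
    intervalIntegral.integral_add (hInt _ _ _ _ (hf2 _) (hf1 _)) (hInt _ _ _ _ (hf2 _) (hf2 _))]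
  rw [pairing hL (fD1 nn L W (j:ℕ) y) (fD1 nn L W (k:ℕ) y) (mu nn (j:ℕ)) (mu nn (k:ℕ))
      (hf1 _) (hf1 _)
      (fun n m => ⟨(m-n)*nn + (k:ℕ) - (j:ℕ), by simp only [mu]; push_cast; ring⟩),
    pairing hL (fD1 nn L W (j:ℕ) y) (fD2 nn L W (k:ℕ) y) (mu nn (j:ℕ)) (muN nn (k:ℕ))
      (hf1 _) (hf2 _)
      (fun n m => ⟨(1-m-n)*nn - (k:ℕ) - (j:ℕ), by simp only [mu, muN]; push_cast; ring⟩),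
    pairing hL (fD2 nn L W (j:ℕ) y) (fD1 nn L W (k:ℕ) y) (muN nn (j:ℕ)) (mu nn (k:ℕ))
      (hf2 _) (hf1 _)
      (fun n m => ⟨(m+n-1)*nn + (k:ℕ) + (j:ℕ), by simp only [mu, muN]; push_cast; ring⟩),
    pairing hL (fD2 nn L W (j:ℕ) y) (fD2 nn L W (k:ℕ) y) (muN nn (j:ℕ)) (muN nn (k:ℕ))
      (hf2 _) (hf2 _)
      (fun n m => ⟨(n-m)*nn + (j:ℕ) - (k:ℕ), by simp only [mu, muN]; push_cast; ring⟩)]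
  by_cases hjk : j = k
  · subst hjk
    have T11 : ∑' p : ℤ×ℤ, (if mu nn (j:ℕ) p.1 = mu nn (j:ℕ) p.2 then
        conj (fD1 nn L W (j:ℕ) y p.1) * fD1 nn L W (j:ℕ) y p.2 else 0)
        = Complex.exp (-(4 * π * ((j:ℕ):ℂ) * y / L)) *
          jtheta2 (2 * (((j:ℕ):ℂ) * (I * W / L) + I * nn * y / L)) (2 * nn * (I * W / L)) := by
      rw [tsum_pairs_graph (hf1 (j:ℕ)) (hf1 (j:ℕ)) (fun n => n)
        (fun n m => by rw [solve_ll hj hj hNnn]; simp)]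
      simp only [fD1]
      exact Sdiag1 nn L W (j:ℕ) y
    have T22 : ∑' p : ℤ×ℤ, (if muN nn (j:ℕ) p.1 = muN nn (j:ℕ) p.2 then
        conj (fD2 nn L W (j:ℕ) y p.1) * fD2 nn L W (j:ℕ) y p.2 else 0)
        = Complex.exp (4 * π * ((j:ℕ):ℂ) * y / L) *
          jtheta2 (2 * (((j:ℕ):ℂ) * (I * W / L) - I * nn * y / L)) (2 * nn * (I * W / L)) := by
      rw [tsum_pairs_graph (hf2 (j:ℕ)) (hf2 (j:ℕ)) (fun n => n)
        (fun n m => by simp only [muN, neg_inj]; rw [solve_ll hj hj hNnn]; simp)]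
      simp only [fD2]
      exact Sdiag2 nn L W (j:ℕ) y
    by_cases hJ0 : (j:ℕ) = 0
    · have T12 : ∑' p : ℤ×ℤ, (if mu nn (j:ℕ) p.1 = muN nn (j:ℕ) p.2 then
          conj (fD1 nn L W (j:ℕ) y p.1) * fD2 nn L W (j:ℕ) y p.2 else 0)
          = Complex.exp (-(4 * π * ((j:ℕ):ℂ) * y / L)) *
            jtheta2 (2 * (((j:ℕ):ℂ) * (I * W / L) + I * nn * y / L))
              (2 * nn * (I * W / L)) := by
        rw [tsum_pairs_graph (hf1 (j:ℕ)) (hf2 (j:ℕ)) (fun n => 1 - n)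
          (fun n m => by simp only [muN]; rw [solve_lr hj hj hNnn (by omega)]; omega),
          ← Sdiag1 nn L W (j:ℕ) y]
        refine tsum_congr fun n => ?_
        simp only [fD1, fD2]
        congr 1
        rw [hJ0]
        exact cf_cross0_a nn L W y n
      have T21 : ∑' p : ℤ×ℤ, (if muN nn (j:ℕ) p.1 = mu nn (j:ℕ) p.2 then
          conj (fD2 nn L W (j:ℕ) y p.1) * fD1 nn L W (j:ℕ) y p.2 else 0)
          = Complex.exp (4 * π * ((j:ℕ):ℂ) * y / L) *
            jtheta2 (2 * (((j:ℕ):ℂ) * (I * W / L) - I * nn * y / L))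
              (2 * nn * (I * W / L)) := by
        rw [tsum_pairs_graph (hf2 (j:ℕ)) (hf1 (j:ℕ)) (fun n => 1 - n)
          (fun n m => by
            simp only [muN]
            rw [neg_eq_iff_eq_neg, solve_lr hj hj hNnn (by omega)]
            omega),
          ← Sdiag2 nn L W (j:ℕ) y]
        refine tsum_congr fun n => ?_
        simp only [fD1, fD2]
        congr 1
        rw [hJ0]
        exact cf_cross0_b nn L W y n
      rw [T11, T12, T21, T22, if_pos rfl, mD, if_pos hJ0, hJ0]
      have ha1 : 2 * (((0:ℕ):ℂ) * (I * W / L) + I * (nn:ℂ) * y / L)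
          = 2 * I * nn * y / L := by push_cast; ring
      have ha2 : 2 * (((0:ℕ):ℂ) * (I * W / L) - I * (nn:ℂ) * y / L)
          = -(2 * I * (nn:ℂ) * y / L) := by push_cast; ring
      rw [ha1, ha2, jtheta2_neg]
      have hb : Complex.exp (-(4 * π * ((0:ℕ):ℂ) * y / L)) = 1 := by norm_num
      have hb2 : Complex.exp (4 * π * ((0:ℕ):ℂ) * y / L) = 1 := by norm_num
      rw [hb, hb2]
      push_cast
      ring
    · by_cases hJN : (j:ℕ) = N - 1
      · have hD : nn = 2 * (j:ℕ) := by omega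
        have h0 : 0 < (j:ℕ) := by omega
        have T12 : ∑' p : ℤ×ℤ, (if mu nn (j:ℕ) p.1 = muN nn (j:ℕ) p.2 then
            conj (fD1 nn L W (j:ℕ) y p.1) * fD2 nn L W (j:ℕ) y p.2 else 0)
            = Complex.exp (-(4 * π * ((j:ℕ):ℂ) * y / L)) *
              jtheta2 (2 * (((j:ℕ):ℂ) * (I * W / L) + I * nn * y / L))
                (2 * nn * (I * W / L)) := by
          rw [tsum_pairs_graph (hf1 (j:ℕ)) (hf2 (j:ℕ)) (fun n => -n)
            (fun n m => by simp only [muN]; rw [solve_lr_D hD h0]),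
            ← Sdiag1 nn L W (j:ℕ) y]
          refine tsum_congr fun n => ?_
          simp only [fD1, fD2]
          congr 1
          exact cf_crossD_a nn L W (j:ℕ) hD y n
        have T21 : ∑' p : ℤ×ℤ, (if muN nn (j:ℕ) p.1 = mu nn (j:ℕ) p.2 then
            conj (fD2 nn L W (j:ℕ) y p.1) * fD1 nn L W (j:ℕ) y p.2 else 0)
            = Complex.exp (4 * π * ((j:ℕ):ℂ) * y / L) *
              jtheta2 (2 * (((j:ℕ):ℂ) * (I * W / L) - I * nn * y / L))
                (2 * nn * (I * W / L)) := by
          rw [tsum_pairs_graph (hf2 (j:ℕ)) (hf1 (j:ℕ)) (fun n => -n)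
            (fun n m => by
              simp only [muN]
              rw [neg_eq_iff_eq_neg, solve_lr_D hD h0]),
            ← Sdiag2 nn L W (j:ℕ) y]
          refine tsum_congr fun n => ?_
          simp only [fD1, fD2]
          congr 1
          exact cf_crossD_b nn L W (j:ℕ) hD y n
        rw [T11, T12, T21, T22, if_pos rfl, mD, if_neg hJ0, if_pos hJN, mStd]
        push_cast
        ring
      · have hlt : (j:ℕ) + (j:ℕ) < nn := by omega
        have T12 : ∑' p : ℤ×ℤ, (if mu nn (j:ℕ) p.1 = muN nn (j:ℕ) p.2 then
            conj (fD1 nn L W (j:ℕ) y p.1) * fD2 nn L W (j:ℕ) y p.2 else 0) = 0 :=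
          tsum_pairs_zero fun n m h => by
            simp only [muN] at h
            exact hJ0 ((solve_lr hj hj hNnn hlt n m).mp h).1
        have T21 : ∑' p : ℤ×ℤ, (if muN nn (j:ℕ) p.1 = mu nn (j:ℕ) p.2 then
            conj (fD2 nn L W (j:ℕ) y p.1) * fD1 nn L W (j:ℕ) y p.2 else 0) = 0 :=
          tsum_pairs_zero fun n m h => by
            simp only [muN] at h
            exact hJ0 ((solve_lr hj hj hNnn hlt n m).mp (neg_eq_iff_eq_neg.mp h)).1
        rw [T11, T12, T21, T22, if_pos rfl, mD, if_neg hJ0, if_neg hJN, mStd]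
        push_cast
        ring
  · have hJJ : (j:ℕ) ≠ (k:ℕ) := fun h => hjk (Fin.ext h)
    have hlt : (j:ℕ) + (k:ℕ) < nn := by omega
    have T11 : ∑' p : ℤ×ℤ, (if mu nn (j:ℕ) p.1 = mu nn (k:ℕ) p.2 then
        conj (fD1 nn L W (j:ℕ) y p.1) * fD1 nn L W (k:ℕ) y p.2 else 0) = 0 :=
      tsum_pairs_zero fun n m h => hJJ ((solve_ll hj hk hNnn n m).mp h).1
    have T12 : ∑' p : ℤ×ℤ, (if mu nn (j:ℕ) p.1 = muN nn (k:ℕ) p.2 then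
        conj (fD1 nn L W (j:ℕ) y p.1) * fD2 nn L W (k:ℕ) y p.2 else 0) = 0 :=
      tsum_pairs_zero fun n m h => by
        simp only [muN] at h
        have := (solve_lr hj hk hNnn hlt n m).mp h
        exact hJJ (by omega)
    have T21 : ∑' p : ℤ×ℤ, (if muN nn (j:ℕ) p.1 = mu nn (k:ℕ) p.2 then
        conj (fD2 nn L W (j:ℕ) y p.1) * fD1 nn L W (k:ℕ) y p.2 else 0) = 0 :=
      tsum_pairs_zero fun n m h => by
        simp only [muN] at h
        have := (solve_lr hj hk hNnn hlt n m).mp (neg_eq_iff_eq_neg.mp h)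
        exact hJJ (by omega)
    have T22 : ∑' p : ℤ×ℤ, (if muN nn (j:ℕ) p.1 = muN nn (k:ℕ) p.2 then
        conj (fD2 nn L W (j:ℕ) y p.1) * fD2 nn L W (k:ℕ) y p.2 else 0) = 0 :=
      tsum_pairs_zero fun n m h => by
        simp only [muN, neg_inj] at h
        exact hJJ ((solve_ll hj hk hNnn n m).mp h).1
    rw [T11, T12, T21, T22, if_neg hjk]
    ring

end Stmt4Aux

theorem statement4 (N : ℕ) (hN : 1 ≤ N) (L W : ℝ) (hL : 0 < L) (hW : 0 < W) :
    -- type B_N : 𝒩 = 2N−1, J(j) = j−1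
    (∀ (j k : Fin N) (y : ℝ),
      (∫ x in (0:ℝ)..L,
        conj (MB (2 * N - 1) L W ((j : ℕ) : ℝ) (x + I * y)) *
          MB (2 * N - 1) L W ((k : ℕ) : ℝ) (x + I * y))
        = if j = k then mB N (2 * N - 1) L W j y else 0) ∧
    -- type B_N^∨ : 𝒩 = 2N, J(j) = j−1
    (∀ (j k : Fin N) (y : ℝ),
      (∫ x in (0:ℝ)..L,
        conj (MB (2 * N) L W ((j : ℕ) : ℝ) (x + I * y)) *
          MB (2 * N) L W ((k : ℕ) : ℝ) (x + I * y))
        = if j = k then mB N (2 * N) L W j y else 0) ∧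
    -- type D_N (N ≥ 2) : 𝒩 = 2(N−1), J(j) = j−1
    (2 ≤ N → ∀ (j k : Fin N) (y : ℝ),
      (∫ x in (0:ℝ)..L,
        conj (MD (2 * (N - 1)) L W ((j : ℕ) : ℝ) (x + I * y)) *
          MD (2 * (N - 1)) L W ((k : ℕ) : ℝ) (x + I * y))
        = if j = k then mD N (2 * (N - 1)) L W j y else 0) := by
  refine ⟨fun j k y => Stmt4Aux.masterB N (2 * N - 1) (by omega) (by omega) (by omega)
      L W hL hW j k y,
    fun j k y => Stmt4Aux.masterB N (2 * N) (by omega) (by omega) (by omega) L W hL hW j k y,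
    fun hN2 j k y => Stmt4Aux.masterD N (2 * (N - 1)) hN2 rfl L W hL hW j k y⟩
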